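/- Let R be an integral domain and let S be an overring of R (a ring with R ⊆ S ⊆ Frac(R)). If R is locally Egyptian, then S is locally Egyptian. -/

import Mathlib

universe u

/-- A commutative ring `D` is *Egyptian* if every nonzero `d : D` is a sum of reciprocals
`d = 1/d₁ + ⋯ + 1/dₙ` of finitely many pairwise distinct nonzero elements `dᵢ` of `D`, the
equality holding in any field in which `D` embeds.  (For an integral domain `D` this is
equivalent to the usual definition, in which the equality is required in the fraction field
of `D`: such an equality holds in one field containing `D` iff it holds in all of them.) -/
def IsEgyptian (D : Type u) [CommRing D] : Prop :=
  ∀ d : D, d ≠ 0 → ∃ s : Finset D, (∀ i ∈ s, i ≠ 0) ∧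
    ∀ (K : Type u) [Field K] (φ : D →+* K), Function.Injective φ →
      φ d = ∑ i ∈ s, (φ i)⁻¹

/-- A domain `D` is *generically Egyptian* if `D[1/f]` is Egyptian for some nonzero `f : D`. -/
def IsGenericallyEgyptian (D : Type u) [CommRing D] : Prop :=
  ∃ f : D, f ≠ 0 ∧ IsEgyptian (Localization.Away f)

/-- A domain `D` is *locally Egyptian* if there is a finite set of generators of the unit
ideal of `D` such that inverting any one of them yields an Egyptian ring. -/
def IsLocallyEgyptian (D : Type u) [CommRing D] : Prop :=
  ∃ s : Finset D, Ideal.span (s : Set D) = ⊤ ∧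
    ∀ f ∈ s, IsEgyptian (Localization.Away f)

section Helpers

variable {D : Type*} [CommRing D]

lemma sum_inv_mul_prod {ι : Type*} {K : Type*} [Field K] [DecidableEq ι]
    (t : Finset ι) (g : ι → K) (ht : ∀ i ∈ t, g i ≠ 0) :
    (∑ i ∈ t, (g i)⁻¹) * ∏ i ∈ t, g i = ∑ j ∈ t, ∏ i ∈ t.erase j, g i := by
  rw [Finset.sum_mul]
  refine Finset.sum_congr rfl fun j hj => ?_
  rw [← Finset.mul_prod_erase t g hj, inv_mul_cancel_left₀ (ht j hj)]

lemma egy_key {D : Type*} [CommRing D] [DecidableEq D] {K : Type*} [Field K] (θ : D →+* K) (hθ : Function.Injective θ)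
    (d : D) (s : Finset D) (hs : ∀ i ∈ s, i ≠ 0) :
    (θ d = ∑ i ∈ s, (θ i)⁻¹) ↔ d * ∏ i ∈ s, i = ∑ j ∈ s, ∏ i ∈ s.erase j, i := by
  have hne : ∀ i ∈ s, θ i ≠ 0 := fun i hi h =>
    hs i hi (hθ (h.trans (map_zero θ).symm))
  have hP : (∏ i ∈ s, θ i) ≠ 0 := Finset.prod_ne_zero_iff.mpr hne
  rw [← (mul_left_injective₀ hP).eq_iff, sum_inv_mul_prod s (fun i => θ i) hne]
  rw [← map_prod θ, ← map_mul θ]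
  have h2 : ∑ j ∈ s, ∏ i ∈ s.erase j, θ i = θ (∑ j ∈ s, ∏ i ∈ s.erase j, i) := by
    rw [map_sum]; exact Finset.sum_congr rfl fun j _ => (map_prod θ _ _).symm
  rw [h2, hθ.eq_iff]

lemma isEgyptian_of_field {D : Type u} [CommRing D] {K : Type*} [Field K]
    (θ : D →+* K) (hθ : Function.Injective θ)
    (h : ∀ d : D, d ≠ 0 → ∃ s : Finset D, (∀ i ∈ s, i ≠ 0) ∧ θ d = ∑ i ∈ s, (θ i)⁻¹) :
    IsEgyptian D := by
  classical
  intro d hd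
  obtain ⟨s, hs, heq⟩ := h d hd
  exact ⟨s, hs, fun K' _ ψ hψ =>
    (egy_key ψ hψ d s hs).mpr ((egy_key θ hθ d s hs).mp heq)⟩

lemma away_lift_injective {K : Type*} [Field K] (φ : D →+* K)
    (hφ : Function.Injective φ) (a : D) (ha : IsUnit (φ a)) :
    Function.Injective (IsLocalization.Away.lift (S := Localization.Away a) a ha) := by
  set j := IsLocalization.Away.lift (S := Localization.Away a) a ha with hj
  rw [injective_iff_map_eq_zero]
  intro x hx
  obtain ⟨⟨r, m⟩, hrm⟩ := IsLocalization.surj (Submonoid.powers a) x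
  have h1 : j x * φ m = φ r := by
    have := congrArg j hrm
    rwa [map_mul, IsLocalization.Away.lift_eq, IsLocalization.Away.lift_eq] at this
  rw [hx, zero_mul] at h1
  have hr : (r : D) = 0 := hφ (h1.symm.trans (map_zero φ).symm)
  have hu : IsUnit (algebraMap D (Localization.Away a) (m : D)) :=
    IsLocalization.map_units _ m
  rw [hr, map_zero] at hrm
  exact hu.mul_left_eq_zero.mp hrm

end Helpers

set_option maxHeartbeats 1000000 in
lemma away_egy_transfer (R : Type u) [CommRing R] [IsDomain R]
    (S : Subring (FractionRing R)) (f : R) (g : S)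
    (hg : (g : FractionRing R) = algebraMap R (FractionRing R) f)
    (hRS : Set.range (algebraMap R (FractionRing R)) ⊆ (S : Set (FractionRing R)))
    (hf : IsEgyptian (Localization.Away f)) :
    IsEgyptian (Localization.Away g) := by
  classical
  by_cases hf0 : f = 0
  · -- trivial ring case
    have hg0 : g = 0 := by
      apply Subtype.ext; rw [hg, hf0, map_zero]; rfl
    have h01 : (0 : Localization.Away g) = 1 := by
      have hmap : algebraMap S (Localization.Away g) g = 0 := by rw [hg0, map_zero]
      have := IsLocalization.Away.algebraMap_isUnit (S := Localization.Away g) g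
      rw [hmap] at this
      exact isUnit_zero_iff.mp this
    haveI : Subsingleton (Localization.Away g) := subsingleton_of_zero_eq_one h01
    intro d hd
    exact absurd (Subsingleton.elim d 0) hd
  · set F := FractionRing R
    set ι : R →+* F := algebraMap R F with hι
    have hinjι : Function.Injective ι := IsFractionRing.injective R F
    have hιf : ι f ≠ 0 := fun h => hf0 (hinjι (h.trans (map_zero ι).symm))
    have hu1 : IsUnit (ι f) := isUnit_iff_ne_zero.mpr hιf
    have hu2 : IsUnit (S.subtype g) := by
      rw [Subring.coe_subtype, hg]; exact hu1
    set j1 : Localization.Away f →+* F := IsLocalization.Away.lift (S := Localization.Away f) f hu1 with hj1def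
    set j2 : Localization.Away g →+* F := IsLocalization.Away.lift (S := Localization.Away g) g hu2 with hj2def
    have hj1 : Function.Injective j1 := away_lift_injective ι hinjι f hu1
    have hj2 : Function.Injective j2 :=
      away_lift_injective S.subtype (fun _ _ h => Subtype.ext h) g hu2
    -- key lifting lemma
    have hlift : ∀ (b : R) (w : Localization.Away f),
        ∃ w2 : Localization.Away g, j2 w2 = ι b * j1 w := by
      intro b w
      obtain ⟨⟨r, m⟩, hrm⟩ := IsLocalization.surj (Submonoid.powers f) w
      obtain ⟨n, hn⟩ := m.2
      have hm : (m : R) = f ^ n := hn.symm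
      have hw : j1 w * (ι f) ^ n = ι r := by
        have := congrArg j1 hrm
        rw [map_mul, IsLocalization.Away.lift_eq, IsLocalization.Away.lift_eq] at this
        rwa [hm, map_pow] at this
      have hugn : IsUnit (algebraMap S (Localization.Away g) (g ^ n)) :=
        IsLocalization.map_units (M := Submonoid.powers g) _ ⟨g ^ n, ⟨n, rfl⟩⟩
      set σ : S := ⟨ι (b * r), hRS ⟨b * r, rfl⟩⟩ with hσ
      refine ⟨algebraMap S (Localization.Away g) σ * ↑hugn.unit⁻¹, ?_⟩
      have hjg : j2 (algebraMap S (Localization.Away g) (g ^ n)) = (ι f) ^ n := by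
        rw [IsLocalization.Away.lift_eq, Subring.coe_subtype]
        push_cast [hg]
        ring
      have hinv : j2 ↑hugn.unit⁻¹ = ((ι f) ^ n)⁻¹ := by
        have h1 : j2 ↑hugn.unit⁻¹ * (ι f) ^ n = 1 := by
          rw [← hjg, ← map_mul, IsUnit.val_inv_mul, map_one]
        exact eq_inv_of_mul_eq_one_left h1
      rw [map_mul, hinv, IsLocalization.Away.lift_eq, Subring.coe_subtype, hσ]
      have hfn : (ι f) ^ n ≠ 0 := pow_ne_zero _ hιf
      rw [mul_inv_eq_iff_eq_mul₀ hfn]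
      change ι (b * r) = _
      rw [map_mul]
      linear_combination ι b * hw.symm
    -- main argument via isEgyptian_of_field
    refine isEgyptian_of_field j2 hj2 ?_
    intro x hx
    have hjx : j2 x ≠ 0 := fun h => hx (hj2 (h.trans (map_zero j2).symm))
    obtain ⟨⟨a, b⟩, hab⟩ := IsLocalization.surj (nonZeroDivisors R) (j2 x)
    have hb0 : ι (b : R) ≠ 0 := fun h =>
      nonZeroDivisors.ne_zero b.2 (hinjι (h.trans (map_zero ι).symm))
    have ha0 : ι a ≠ 0 := by
      rw [← hab]; exact mul_ne_zero hjx hb0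
    set aR : Localization.Away f := algebraMap R (Localization.Away f) a with haR
    have haR0 : aR ≠ 0 := by
      intro h
      apply ha0
      have := congrArg j1 h
      rwa [IsLocalization.Away.lift_eq, map_zero] at this
    obtain ⟨s, hs, hsum⟩ := hf aR haR0
    have heq : ι a = ∑ i ∈ s, (j1 i)⁻¹ := by
      have := hsum F j1 hj1
      rwa [haR, IsLocalization.Away.lift_eq] at this
    haveI : DecidableEq (Localization.Away g) := Classical.decEq _
    choose w2 hw2 using fun i : Localization.Away f => hlift b i
    have hw2inj : ∀ i ∈ s, ∀ i' ∈ s, w2 i = w2 i' → i = i' := by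
      intro i _ i' _ h
      have := congrArg j2 h
      rw [hw2, hw2] at this
      exact hj1 (mul_left_cancel₀ hb0 this)
    refine ⟨s.image w2, ?_, ?_⟩
    · intro y hy
      obtain ⟨i, hi, rfl⟩ := Finset.mem_image.mp hy
      intro h
      have h0 : j2 (w2 i) = 0 := by rw [h, map_zero]
      rw [hw2] at h0
      have hji : j1 i ≠ 0 := fun h => hs i hi (hj1 (h.trans (map_zero j1).symm))
      exact (mul_ne_zero hb0 hji) h0
    · rw [Finset.sum_image hw2inj]
      have : ∑ i ∈ s, (j2 (w2 i))⁻¹ = ∑ i ∈ s, (ι b * j1 i)⁻¹ := by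
        exact Finset.sum_congr rfl fun i _ => by rw [hw2]
      rw [this]
      have hx2 : j2 x = ι a * (ι b)⁻¹ := by
        rw [eq_mul_inv_iff_mul_eq₀ hb0]
        linear_combination hab
      rw [hx2, heq, Finset.sum_mul]
      exact Finset.sum_congr rfl fun i _ => by rw [mul_inv, mul_comm]

/-- If `S` is an overring of `R` (a subring of `Frac(R)` containing `R`) and `R` is
locally Egyptian, then so is `S`. -/
theorem statement7 (R : Type u) [CommRing R] [IsDomain R]
    (S : Subring (FractionRing R))
    (hRS : Set.range (algebraMap R (FractionRing R)) ⊆ (S : Set (FractionRing R)))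
    (hR : IsLocallyEgyptian R) :
    IsLocallyEgyptian S := by
  haveI : DecidableEq ↥S := Classical.decEq _
  obtain ⟨s, hspan, hegy⟩ := hR
  set ψ : R →+* S := (algebraMap R (FractionRing R)).codRestrict S (fun r => hRS ⟨r, rfl⟩) with hψ
  refine ⟨s.image ψ, ?_, ?_⟩
  · rw [Finset.coe_image, ← Ideal.map_span ψ, hspan, Ideal.map_top]
  · intro g hgmem
    obtain ⟨f, hf, rfl⟩ := Finset.mem_image.mp hgmem
    exact away_egy_transfer R S f (ψ f) rfl hRS (hegy f hf)
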